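/- With notation as in the context, η_λ = 𝒪 if and only if e ∈ T (as a subset of T_E); equivalently, η_λ ≠ 𝒪 if and only if the idempotent e does not lie in T. -/

import Mathlib

/-- With `𝒪` a complete DVR with fraction field `E`, `T` a commutative
reduced finite flat local `𝒪`-algebra, `λ : T → 𝒪` an `𝒪`-algebra homomorphism,
`T_E = T ⊗_𝒪 E` and `e ∈ T_E` the idempotent attached to `λ`:
`η_λ = λ(Ann_T(ker λ))` equals `𝒪` if and only if `e` lies in (the image of) `T`. -/
theorem statement5
    {O : Type*} [CommRing O] [IsDomain O] [IsDiscreteValuationRing O]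
    [IsAdicComplete (IsLocalRing.maximalIdeal O) O]
    {E : Type*} [Field E] [Algebra O E] [IsFractionRing O E]
    {T : Type*} [CommRing T] [IsReduced T] [IsLocalRing T]
    [Algebra O T] [Module.Finite O T] [Module.Flat O T]
    {TE : Type*} [CommRing TE] [Algebra T TE] [Algebra O TE] [Algebra E TE]
    [IsScalarTower O T TE] [IsScalarTower O E TE]
    [IsLocalization (Algebra.algebraMapSubmonoid T (nonZeroDivisors O)) TE]
    (lam : T →ₐ[O] O)
    (lamE : TE →ₐ[E] E) (e : TE)
    (hlamE : ∀ t : T, lamE (algebraMap T TE t) = algebraMap O E (lam t))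
    (he1 : lamE e = 1)
    (he2 : ∀ P : Ideal TE, P.IsPrime → P ≠ RingHom.ker lamE → e ∈ P) :
    Ideal.map lam (Submodule.annihilator (RingHom.ker lam)) = ⊤ ↔
      ∃ t : T, algebraMap T TE t = e := by
  haveI : Module.FinitePresentation O T := Module.finitePresentation_of_finite O T
  haveI : Module.Free O T := Module.free_of_flat_of_isLocalRing
  have hMle : Algebra.algebraMapSubmonoid T (nonZeroDivisors O) ≤ nonZeroDivisors T := by
    rintro _ ⟨s, hs, rfl⟩
    refine mem_nonZeroDivisors_iff_right.mpr fun t ht => ?_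
    rw [mul_comm, ← Algebra.smul_def] at ht
    rcases smul_eq_zero.mp ht with h | h
    · exact absurd h (nonZeroDivisors.ne_zero hs)
    · exact h
  have injT : Function.Injective (algebraMap T TE) := IsLocalization.injective TE hMle
  have injOE : Function.Injective (algebraMap O E) := IsFractionRing.injective O E
  haveI : IsReduced TE := by
    constructor
    intro z ⟨n, hzn⟩
    obtain ⟨⟨x, s⟩, hx⟩ := IsLocalization.surj (Algebra.algebraMapSubmonoid T (nonZeroDivisors O)) z
    have hxn : algebraMap T TE (x ^ n) = 0 := by
      rw [map_pow, ← hx, mul_pow, hzn, zero_mul]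
    have : x ^ n = 0 := injT (by rw [hxn, map_zero])
    have hx0 : x = 0 := IsReduced.eq_zero x ⟨n, this⟩
    have hu := IsLocalization.map_units TE s
    have : z * algebraMap T TE s = 0 := by rw [hx, hx0, map_zero]
    exact (hu.mul_left_eq_zero).mp this
  constructor
  · -- η = O ⇒ e ∈ T
    intro htop
    have hsurj : Function.Surjective lam := fun x => ⟨algebraMap O T x, lam.commutes x⟩
    have h1 : (1 : O) ∈ Ideal.map lam (Submodule.annihilator (RingHom.ker lam)) := by
      rw [htop]; trivial
    obtain ⟨t, htA, hlt⟩ := (Ideal.mem_map_iff_of_surjective lam hsurj).mp h1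
    refine ⟨t, ?_⟩
    have hker : (RingHom.ker lamE).IsMaximal :=
      RingHom.ker_isMaximal_of_surjective lamE (fun x => ⟨algebraMap E TE x, lamE.commutes x⟩)
    -- map t annihilates ker lamE
    have hann : ∀ z ∈ RingHom.ker lamE, algebraMap T TE t * z = 0 := by
      intro z hz
      obtain ⟨⟨x, s⟩, hx⟩ :=
        IsLocalization.surj (Algebra.algebraMapSubmonoid T (nonZeroDivisors O)) z
      have hlx : lam x = 0 := by
        apply injOE
        rw [← hlamE, ← hx, map_mul, hz, zero_mul, map_zero]
      have htx : t * x = 0 := by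
        have := Submodule.mem_annihilator.mp htA x hlx
        simpa [smul_eq_mul] using this
      have hu := IsLocalization.map_units TE s
      have : algebraMap T TE t * z * algebraMap T TE s = 0 := by
        rw [mul_assoc, hx, ← map_mul, htx, map_zero]
      exact hu.mul_left_eq_zero.mp this
    have hsub : algebraMap T TE t - e = 0 := by
      have hnil : algebraMap T TE t - e ∈ nilradical TE := by
        rw [nilradical_eq_sInf]
        refine Ideal.mem_sInf.mpr ?_
        rintro P hP
        by_cases h : P = RingHom.ker lamE
        · subst h
          show lamE _ = 0
          rw [map_sub, hlamE, hlt, he1, map_one, sub_self]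
        · have he : e ∈ P := he2 P hP h
          have hz : ∃ z ∈ RingHom.ker lamE, z ∉ P := by
            by_contra hcon
            push_neg at hcon
            exact h ((hker.eq_of_le hP.ne_top hcon).symm)
          obtain ⟨z, hz1, hz2⟩ := hz
          have : algebraMap T TE t * z ∈ P := by rw [hann z hz1]; exact P.zero_mem
          rcases hP.mem_or_mem this with h' | h'
          · exact sub_mem h' he
          · exact absurd h' hz2
      simpa using hnil
    exact sub_eq_zero.mp hsub
  · rintro ⟨t, ht⟩
    have hlt : lam t = 1 := by
      apply injOE
      rw [← hlamE, ht, he1, map_one]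
    have htA : t ∈ Submodule.annihilator (RingHom.ker lam) := by
      refine Submodule.mem_annihilator.mpr ?_
      intro n hn
      have hln : lam n = 0 := hn
      apply injT
      rw [map_zero]
      have : algebraMap T TE (t * n) ∈ nilradical TE := by
        rw [nilradical_eq_sInf]
        refine Ideal.mem_sInf.mpr ?_
        rintro P hP
        by_cases h : P = RingHom.ker lamE
        · subst h
          show lamE _ = 0
          rw [hlamE, map_mul, hln, mul_zero, map_zero]
        · have : algebraMap T TE (t * n) = e * algebraMap T TE n := by
            rw [map_mul, ht]
          rw [this]
          exact P.mul_mem_right _ (he2 P hP h)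
      have h0 : algebraMap T TE (t * n) = 0 := by simpa using this
      simpa [smul_eq_mul] using h0
    rw [Ideal.eq_top_iff_one, ← hlt]
    exact Ideal.mem_map_of_mem lam htA
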